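/- arXiv:2402.16207 — 2 statements merged into one kernel-verified Lean document; each statement's English description precedes it below -/
import Mathlib

section
/- For each k ∈ [1,n], the number of order ideals J of the type C Gelfand–Tsetlin poset P satisfying |J ∩ A| = k (where A = {(i,i) : 1 ≤ i ≤ n}) equals C(2n,k) − C(2n,k−2). -/
open scoped Classical Pointwise

noncomputable section

/-- Position of `j` in the total order `1 ⋖ … ⋖ n ⋖ -n ⋖ … ⋖ -1` on `N`. -/
def ordKey (n : ℕ) (j : ℤ) : ℤ := if 0 < j then j else 2 * n + 1 + j

/-- Membership in the type C Gelfand–Tsetlin poset `P`: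
pairs `(i,j)` with `1 ≤ i ≤ n` and `i ≤ |j| ≤ n`. -/
def inP (n : ℕ) (p : ℤ × ℤ) : Prop :=
  1 ≤ p.1 ∧ p.1 ≤ (n : ℤ) ∧ p.1 ≤ |p.2| ∧ |p.2| ≤ (n : ℤ)

/-- The order relation `⪯` of `P`: `(i₁,j₁) ⪯ (i₂,j₂)` iff `i₁ ≤ i₂` and `j₁ ⩽̇ j₂`. -/
def ple (n : ℕ) (p q : ℤ × ℤ) : Prop :=
  p.1 ≤ q.1 ∧ ordKey n p.2 ≤ ordKey n q.2

/-- Strict version of `⪯`. -/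
def plt (n : ℕ) (p q : ℤ × ℤ) : Prop := ple n p q ∧ p ≠ q

/-- The elements of `N = {1,…,n,-n,…,-1}` listed in increasing `⋖` order. -/
def jList (n : ℕ) : List ℤ :=
  ((List.range n).map fun t => (t : ℤ) + 1) ++ ((List.range n).map fun t => (t : ℤ) - n)

/-- All pairs `(i,j)` with `i ∈ [1,n]`, `j ∈ N`, ordered first by `i` increasing,
then by `j` increasing with respect to `⋖`. -/
def posList (n : ℕ) : List (ℤ × ℤ) :=
  (List.range n).flatMap fun a => (jList n).map fun j => ((a : ℤ) + 1, j)

/-- `P` as a finite set. -/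
def Pfin (n : ℕ) : Finset (ℤ × ℤ) := (posList n).toFinset.filter (inP n)

/-- `N` as a finite set. -/
def Nfin (n : ℕ) : Finset ℤ := (jList n).toFinset

/-- The diagonal `A = {(i,i) : 1 ≤ i ≤ n}`. -/
def Aset (n : ℕ) : Finset (ℤ × ℤ) :=
  (Finset.range n).image fun t => (((t : ℤ) + 1, (t : ℤ) + 1) : ℤ × ℤ)

/-- Order ideals (downward closed subsets) of `P`. -/
def IsIdeal (n : ℕ) (J : Finset (ℤ × ℤ)) : Prop :=
  (∀ p ∈ J, inP n p) ∧ ∀ p ∈ J, ∀ q ∈ Pfin n, ple n q p → q ∈ J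

/-- The set of `≺`-maximal elements of `J`. -/
def maxPrec (n : ℕ) (J : Finset (ℤ × ℤ)) : Finset (ℤ × ℤ) :=
  J.filter fun p => ∀ q ∈ J, ple n p q → q = p

/-- `M_O(J) = (J ∩ O) ∪ max_≺(J)`. -/
def MO (n : ℕ) (O J : Finset (ℤ × ℤ)) : Finset (ℤ × ℤ) := (J ∩ O) ∪ maxPrec n J

/-- The permutation `w_M`: the product of the transpositions `s_{i,j}` over `(i,j) ∈ M`,
ordered first by `i` increasing and then by `j` increasing with respect to `⋖`
(the leftmost factor acts last). -/
def wPerm (n : ℕ) (M : Finset (ℤ × ℤ)) : Equiv.Perm ℤ :=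
  (((posList n).filter fun p => decide (p ∈ M)).map fun p => Equiv.swap p.1 p.2).prod

/-- `w^{O,J} = w_O⁻¹ ⬝ w_{M_O(J)}`. -/
def wOJ (n : ℕ) (O J : Finset (ℤ × ℤ)) : Equiv.Perm ℤ :=
  (wPerm n O)⁻¹ * wPerm n (MO n O J)

/-- The principal order ideal `⟨i,j⟩` of `(i,j) ∈ P`. -/
def princ (n : ℕ) (p : ℤ × ℤ) : Finset (ℤ × ℤ) := (Pfin n).filter fun q => ple n q p

/-- `r(i,j) = w^{O,⟨i,j⟩}(i)`. -/
def rMap (n : ℕ) (O : Finset (ℤ × ℤ)) (i j : ℤ) : ℤ := wOJ n O (princ n (i, j)) i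

/-- Inverse of `ordKey` (on the relevant range `[1, 2n]`). -/
def invOrdKey (n : ℕ) (t : ℤ) : ℤ := if t ≤ (n : ℤ) then t else t - (2 * n + 1)

/-- The `⋖`-maximal `j'` with `j' ⋖ j` and `(i,j') ∈ O`. -/
def prevO (n : ℕ) (O : Finset (ℤ × ℤ)) (i j : ℤ) : ℤ :=
  invOrdKey n (WithBot.unbotD 0 ((((Nfin n).filter fun j' => (i, j') ∈ O ∧ ordKey n j' < ordKey n j).image
    (ordKey n)).max))

/-- The pipe-dream linear transform `ξ` of `ℝ^P` (coordinates outside `P` are untouched):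
`ξ(ε_{i,i}) = ε_{i,r(i,i)}` and `ξ(ε_{i,j}) = ε_{i,r(i,j)} - ε_{i,r(i,j')}` for `j ≠ i`,
where `j'` is `⋖`-maximal with `j' ⋖ j` and `(i,j') ∈ O`. -/
def xiMap (n : ℕ) (O : Finset (ℤ × ℤ)) (x : (ℤ × ℤ) → ℝ) : (ℤ × ℤ) → ℝ := fun q =>
  if inP n q then
    (∑ j ∈ (Nfin n).filter (fun j => inP n (q.1, j) ∧ rMap n O q.1 j = q.2), x (q.1, j))
    - (∑ j ∈ (Nfin n).filter
        (fun j => inP n (q.1, j) ∧ j ≠ q.1 ∧ rMap n O q.1 (prevO n O q.1 j) = q.2), x (q.1, j))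
  else x q

/-- Indicator vector `1_{M_O(J)} ∈ ℝ^P`. -/
def indicMO (n : ℕ) (O J : Finset (ℤ × ℤ)) : (ℤ × ℤ) → ℝ := fun p =>
  if p ∈ MO n O J then 1 else 0

/-- The fundamental marked chain-order polytope `𝒬_O(ω_k)`:
the convex hull of the vectors `1_{M_O(J)}`, `J ∈ 𝒥ₖ`. -/
def QOfund (n : ℕ) (O : Finset (ℤ × ℤ)) (k : ℕ) : Set ((ℤ × ℤ) → ℝ) :=
  convexHull ℝ {x | ∃ J : Finset (ℤ × ℤ),
    IsIdeal n J ∧ (J ∩ Aset n).card = k ∧ x = indicMO n O J}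

/-- The marked chain-order polytope `𝒬_O(λ)` for `λ = a₁ω₁ + … + a_nω_n`:
the Minkowski sum `a₁𝒬_O(ω₁) + … + a_n𝒬_O(ω_n)`. -/
def QO (n : ℕ) (O : Finset (ℤ × ℤ)) (a : ℕ → ℕ) : Set ((ℤ × ℤ) → ℝ) :=
  ∑ k ∈ Finset.Icc 1 n, a k • QOfund n O k

/-- Integrality (lattice point) predicate. -/
def IsLat (x : (ℤ × ℤ) → ℝ) : Prop := ∀ p, ∃ m : ℤ, x p = m

/-- Type B: `λ(i) = a_i + … + a_{n-1} + a_n/2`. -/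
def lamB (n : ℕ) (a : ℕ → ℕ) (i : ℤ) : ℝ :=
  (∑ t ∈ Finset.Icc i.toNat (n - 1), (a t : ℝ)) + (a n : ℝ) / 2

/-- The type B poset polytope `𝒬^B_O(λ)` (H-description with factor `1/2`
on the coordinates in `B = {(i,-i)}`). -/
def QB (n : ℕ) (O : Finset (ℤ × ℤ)) (lam : ℤ → ℝ) : Set ((ℤ × ℤ) → ℝ) :=
  {x | (∀ i : ℤ, 1 ≤ i → i ≤ (n : ℤ) → x (i, i) = lam i) ∧
    (∀ p, inP n p → 0 ≤ x p) ∧ (∀ p, ¬ inP n p → x p = 0) ∧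
    ∀ (pq rs : ℤ × ℤ) (c : List (ℤ × ℤ)), pq ∈ O → inP n rs →
      (∀ q ∈ c, inP n q ∧ q ∉ O) →
      List.Chain' (plt n) (pq :: (c ++ [rs])) →
      (c.map x).sum ≤ x pq - (if rs.2 = -rs.1 then (1 : ℝ) / 2 else 1) * x rs}

/-- The point `x^{J,D}`. -/
def xJD (n : ℕ) (O J : Finset (ℤ × ℤ)) (D : Finset ℤ) : (ℤ × ℤ) → ℝ := fun p =>
  if p ∈ MO n O J then (if p.2 = -p.1 ∧ p.1 ∉ D then 2 else 1) else 0

/-- The projection `π : ℝ^P → ℝ^{P∖A}` (realized by zeroing the `A`-coordinates). -/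
def piA (x : (ℤ × ℤ) → ℝ) : (ℤ × ℤ) → ℝ := fun p => if p.2 = p.1 then 0 else x p

/-- The transformed type B poset polytope `Π^B_O(λ) = πξ(𝒬^B_O(λ))`. -/
def PiB (n : ℕ) (O : Finset (ℤ × ℤ)) (a : ℕ → ℕ) : Set ((ℤ × ℤ) → ℝ) :=
  (fun x => piA (xiMap n O x)) '' QB n O (lamB n a)

/-- The point `y^D ∈ ℝ^{P∖A}`. -/
def yD (D : Finset ℤ) : (ℤ × ℤ) → ℝ := fun p => if p.2 = -p.1 ∧ p.1 ∈ D then 1 else 0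


-- ========================================================================
-- Auxiliary development for Statement 1
-- ========================================================================

/-- Weakly decreasing sequences `c : Fin l → ℤ` with `j ≤ c i ≤ m - 1 - i`. -/
def Tset (m : ℤ) (l : ℕ) (j : ℤ) : Finset (Fin l → ℤ) :=
  (Fintype.piFinset fun i : Fin l => Finset.Icc j (m - 1 - (i : ℤ))).filter
    fun c => ∀ i₁ i₂ : Fin l, i₁ ≤ i₂ → c i₂ ≤ c i₁

def V (l : ℕ) (a : ℕ) : ℤ :=
  ((a + l - 1).choose l : ℤ) - (if 2 ≤ l then ((a + l - 1).choose (l - 2) : ℤ) else 0)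

lemma V_zero (x : ℕ) : V 0 x = 1 := by simp [V]

lemma V_one (x : ℕ) : V 1 x = x := by
  simp [V, Nat.add_sub_cancel, Nat.choose_one_right]

lemma V_two (x : ℕ) : V 2 x = ((x + 1).choose 2 : ℤ) - 1 := by
  unfold V
  rw [if_pos (by omega), show x + 2 - 1 = x + 1 by omega, show 2 - 2 = 0 from rfl,
    Nat.choose_zero_right]
  push_cast; ring

lemma Vstep (l a : ℕ) (_h : l ≤ a) : V (l + 1) a + V l (a + 1) = V (l + 1) (a + 1) := by
  match l with
  | 0 => rw [V_one, V_zero, V_one]; push_cast; ring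
  | 1 =>
    rw [V_two, V_one, V_two]
    have p := Nat.choose_succ_succ' (a + 1) 1
    rw [Nat.choose_one_right] at p
    have p' : (((a + 1 + 1).choose (1 + 1)) : ℤ)
        = ((a + 1) : ℤ) + ((a + 1).choose (1 + 1) : ℤ) := by exact_mod_cast p
    have e1 : (1:ℕ) + 1 = 2 := rfl
    rw [e1] at p'
    rw [show a + 1 + 1 = a + 2 by omega] at p'
    rw [show a + 1 + 1 = a + 2 by omega]
    push_cast at p' ⊢
    omega
  | (l' + 2) =>
    unfold V
    rw [if_pos (by omega), if_pos (by omega), if_pos (by omega)]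
    rw [show a + (l' + 2 + 1) - 1 = a + l' + 2 by omega,
      show a + 1 + (l' + 2) - 1 = a + l' + 2 by omega,
      show a + 1 + (l' + 2 + 1) - 1 = a + l' + 2 + 1 by omega,
      show l' + 2 + 1 - 2 = l' + 1 from rfl,
      show l' + 2 - 2 = l' from rfl]
    have p1 : ((a + l' + 2 + 1).choose (l' + 2 + 1) : ℤ)
        = ((a + l' + 2).choose (l' + 2) : ℤ) + ((a + l' + 2).choose (l' + 2 + 1) : ℤ) := by
      exact_mod_cast Nat.choose_succ_succ' (a + l' + 2) (l' + 2)
    have p2 : ((a + l' + 2 + 1).choose (l' + 1) : ℤ)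
        = ((a + l' + 2).choose l' : ℤ) + ((a + l' + 2).choose (l' + 1) : ℤ) := by
      exact_mod_cast Nat.choose_succ_succ' (a + l' + 2) l'
    omega

lemma sumV (l : ℕ) : ∀ a : ℕ, l ≤ a →
    (∑ b ∈ Finset.Icc (l + 1) a, V l b) = V (l + 1) a := by
  intro a
  induction a with
  | zero =>
    intro h
    have : l = 0 := by omega
    subst this
    rw [Finset.Icc_eq_empty (by omega), Finset.sum_empty]
    norm_num [V]
  | succ a ih =>
    intro h
    rcases Nat.lt_or_ge a l with hlt | hge
    · have hla : l = a + 1 := by omega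
      subst hla
      rw [Finset.Icc_eq_empty (by omega), Finset.sum_empty]
      unfold V
      rw [if_pos (by omega)]
      rw [show a + 1 + (a + 1 + 1) - 1 = 2 * (a + 1) by omega,
        show a + 1 + 1 - 2 = a from rfl]
      have hs : (2 * (a + 1)).choose (2 * (a + 1) - (a + 1 + 1)) =
          (2 * (a + 1)).choose (a + 1 + 1) := Nat.choose_symm (by omega)
      rw [show 2 * (a + 1) - (a + 1 + 1) = a by omega] at hs
      rw [hs]
      ring
    · rw [Finset.sum_Icc_succ_top (by omega), ih hge]
      exact Vstep l a hge

lemma Tset_zero (m j : ℤ) : (Tset m 0 j).card = 1 := by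
  have : Tset m 0 j = {fun _ : Fin 0 => (0 : ℤ)} := by
    ext f
    simp only [Tset, Finset.mem_filter, Fintype.mem_piFinset, Finset.mem_singleton]
    constructor
    · intro _; funext i; exact i.elim0
    · intro h; subst h
      exact ⟨fun i => i.elim0, fun i => i.elim0⟩
  rw [this, Finset.card_singleton]

lemma Tset_succ (m : ℤ) (l : ℕ) (j : ℤ) :
    (Tset m (l + 1) j).card = ∑ v ∈ Finset.Icc j (m - 1 - (l : ℤ)), (Tset m l v).card := by
  rw [← Finset.card_sigma]
  refine Finset.card_bij'
    (fun c _ => (⟨c (Fin.last l), Fin.init c⟩ : Σ _ : ℤ, Fin l → ℤ))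
    (fun d _ => Fin.snoc d.2 d.1) ?_ ?_ ?_ ?_
  · intro c hc
    simp only [Tset, Finset.mem_filter, Fintype.mem_piFinset] at hc
    obtain ⟨hbd, hmono⟩ := hc
    rw [Finset.mem_sigma]
    constructor
    · have := hbd (Fin.last l)
      simpa using this
    · simp only [Tset, Finset.mem_filter, Fintype.mem_piFinset]
      refine ⟨fun i => ?_, fun i₁ i₂ h => hmono i₁.castSucc i₂.castSucc (by simpa using h)⟩
      rw [Finset.mem_Icc]
      have h1 := hmono i.castSucc (Fin.last l) (Fin.le_last _)
      have h2 := hbd i.castSucc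
      rw [Finset.mem_Icc] at h2
      refine ⟨h1, ?_⟩
      simpa [Fin.init] using h2.2
  · intro d hd
    rw [Finset.mem_sigma] at hd
    obtain ⟨hv, hrest⟩ := hd
    rw [Finset.mem_Icc] at hv
    simp only [Tset, Finset.mem_filter, Fintype.mem_piFinset, Finset.mem_Icc] at hrest
    obtain ⟨hbd, hmono⟩ := hrest
    simp only [Tset, Finset.mem_filter, Fintype.mem_piFinset, Finset.mem_Icc]
    have hsnoc : ∀ i : Fin (l + 1), ((Fin.snoc d.2 d.1 : Fin (l + 1) → ℤ) i = d.1 ∧ (i : ℕ) = l) ∨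
        (∃ i' : Fin l, i = i'.castSucc ∧ (Fin.snoc d.2 d.1 : Fin (l + 1) → ℤ) i = d.2 i') := by
      intro i
      rcases Fin.eq_castSucc_or_eq_last i with ⟨i', rfl⟩ | rfl
      · exact Or.inr ⟨i', rfl, Fin.snoc_castSucc _ _ _⟩
      · exact Or.inl ⟨Fin.snoc_last _ _, rfl⟩
    constructor
    · intro i
      rcases hsnoc i with ⟨he, hv'⟩ | ⟨i', rfl, he⟩
      · rw [he, hv']
        exact ⟨hv.1, by omega⟩
      · rw [he]
        refine ⟨le_trans hv.1 (hbd i').1, ?_⟩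
        have := (hbd i').2
        simp only [Fin.coe_castSucc]
        omega
    · intro i₁ i₂ h
      rw [Fin.le_def] at h
      rcases hsnoc i₂ with ⟨he₂, hv₂⟩ | ⟨i₂', rfl, he₂⟩
      · rw [he₂]
        rcases hsnoc i₁ with ⟨he₁, _⟩ | ⟨i₁', rfl, he₁⟩
        · rw [he₁]
        · rw [he₁]; exact (hbd i₁').1
      · rw [he₂]
        rcases hsnoc i₁ with ⟨_, hv₁⟩ | ⟨i₁', rfl, he₁⟩
        · exfalso
          have := i₂'.isLt
          simp only [Fin.coe_castSucc] at h
          omega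
        · rw [he₁]
          apply hmono
          rw [Fin.le_def]
          simpa using h
  · intro c _
    exact Fin.snoc_init_self c
  · intro d _
    obtain ⟨v, f⟩ := d
    simp [Fin.snoc_last, Fin.init_snoc]

lemma Tcard : ∀ (l : ℕ) (m j : ℤ), (l : ℤ) ≤ m - j + 1 →
    ((Tset m l j).card : ℤ) = V l ((m - j).toNat) := by
  intro l
  induction l with
  | zero =>
    intro m j _
    rw [Tset_zero]
    norm_num [V]
  | succ l ih =>
    intro m j hl
    rw [Tset_succ]
    push_cast
    rw [Finset.sum_nbij' (fun v : ℤ => (m - v).toNat) (fun b : ℕ => m - (b : ℤ))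
      (t := Finset.Icc (l + 1) ((m - j).toNat)) (g := fun b => V l b)
      ?_ ?_ ?_ ?_ ?_]
    · exact sumV l ((m - j).toNat) (by omega)
    · intro v hv
      rw [Finset.mem_Icc] at hv ⊢
      omega
    · intro b hb
      rw [Finset.mem_Icc] at hb ⊢
      omega
    · intro v hv
      rw [Finset.mem_Icc] at hv
      omega
    · intro b hb
      rw [Finset.mem_Icc] at hb
      omega
    · intro v hv
      rw [Finset.mem_Icc] at hv
      exact ih m v (by omega)


lemma key_lemma (n : ℕ) (j i : ℤ) (h1 : 1 ≤ |j|) (h2 : |j| ≤ (n : ℤ)) :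
    i ≤ |j| ↔ i ≤ ordKey n j ∧ ordKey n j ≤ 2 * (n : ℤ) + 1 - i := by
  by_cases h0 : 0 < j
  · have ha : |j| = j := abs_of_pos h0
    simp only [ordKey, if_pos h0]
    rw [ha] at h1 h2 ⊢
    omega
  · have ha : |j| = -j := abs_of_nonpos (by omega)
    simp only [ordKey, if_neg h0]
    rw [ha] at h1 h2 ⊢
    omega

lemma exists_key (n : ℕ) (t : ℤ) (h1 : 1 ≤ t) (h2 : t ≤ 2 * (n : ℤ)) :
    ∃ j : ℤ, 1 ≤ |j| ∧ |j| ≤ (n : ℤ) ∧ ordKey n j = t := by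
  by_cases h : t ≤ (n : ℤ)
  · refine ⟨t, ?_, ?_, ?_⟩
    · rw [abs_of_pos (by omega)]; exact h1
    · rw [abs_of_pos (by omega)]; exact h
    · simp only [ordKey, if_pos (by omega : (0:ℤ) < t)]
  · refine ⟨t - (2 * (n : ℤ) + 1), ?_, ?_, ?_⟩
    · rw [abs_of_neg (by omega)]; omega
    · rw [abs_of_neg (by omega)]; omega
    · simp only [ordKey, if_neg (by omega : ¬ (0:ℤ) < t - (2 * (n:ℤ) + 1))]
      omega

lemma ordKey_diag (n : ℕ) (i : ℤ) (h : 0 < i) : ordKey n i = i := by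
  simp only [ordKey, if_pos h]

lemma mem_jList {n : ℕ} {j : ℤ} (h1 : 1 ≤ |j|) (h2 : |j| ≤ (n : ℤ)) : j ∈ jList n := by
  unfold jList
  rw [List.mem_append]
  simp only [List.pure_def, List.bind_eq_flatMap, List.mem_map, List.mem_flatMap,
    List.mem_range, List.mem_singleton]
  by_cases h0 : 0 < j
  · have ha : |j| = j := abs_of_pos h0
    rw [ha] at h1 h2
    left
    exact ⟨j - 1, ⟨(j - 1).toNat, by omega, by omega⟩, by omega⟩
  · have ha : |j| = -j := abs_of_nonpos (by omega)
    rw [ha] at h1 h2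
    right
    exact ⟨j + n, ⟨(j + n).toNat, by omega, by omega⟩, by omega⟩

lemma mem_Pfin {n : ℕ} {p : ℤ × ℤ} : p ∈ Pfin n ↔ inP n p := by
  unfold Pfin
  rw [Finset.mem_filter, List.mem_toFinset]
  constructor
  · exact fun h => h.2
  · intro h
    refine ⟨?_, h⟩
    obtain ⟨h1, h2, h3, h4⟩ := h
    unfold posList
    simp only [List.pure_def, List.bind_eq_flatMap, List.mem_map, List.mem_flatMap,
      List.mem_range]
    refine ⟨(p.1 - 1).toNat, ⟨(p.1 - 1).toNat, by omega, List.mem_singleton_self _⟩, p.2, mem_jList (by omega) h4, ?_⟩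
    rw [Prod.ext_iff]
    constructor
    · show ((p.1 - 1).toNat : ℤ) + 1 = p.1
      omega
    · rfl

lemma inP_diag {n : ℕ} {i : ℤ} (h1 : 1 ≤ i) (h2 : i ≤ (n : ℤ)) : inP n (i, i) := by
  have ha : |i| = i := abs_of_pos (by omega)
  refine ⟨h1, h2, ?_, ?_⟩
  · show i ≤ |i|
    rw [ha]
  · show |i| ≤ (n : ℤ)
    rw [ha]; exact h2

lemma ideal_closed {n : ℕ} {J : Finset (ℤ × ℤ)} (hJ : IsIdeal n J) {p q : ℤ × ℤ}
    (hp : p ∈ J) (hq : inP n q) (hle : ple n q p) : q ∈ J :=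
  hJ.2 p hp q (mem_Pfin.mpr hq) hle

lemma down_range {S : Finset ℕ} (h : ∀ t ∈ S, ∀ t', t' ≤ t → t' ∈ S) :
    S = Finset.range S.card := by
  ext t
  simp only [Finset.mem_range]
  constructor
  · intro ht
    have hsub : Finset.range (t + 1) ⊆ S := by
      intro x hx
      rw [Finset.mem_range] at hx
      exact h t ht x (by omega)
    have := Finset.card_le_card hsub
    rw [Finset.card_range] at this
    omega
  · intro ht
    by_contra hts
    have hsub : S ⊆ Finset.range t := by
      intro s hs
      rw [Finset.mem_range]
      by_contra hlt
      exact hts (h s hs t (by omega))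
    have := Finset.card_le_card hsub
    rw [Finset.card_range] at this
    omega

lemma mem_Aset {n : ℕ} {p : ℤ × ℤ} :
    p ∈ Aset n ↔ ∃ t : ℕ, t < n ∧ (((t : ℤ) + 1, (t : ℤ) + 1) : ℤ × ℤ) = p := by
  unfold Aset
  simp only [Finset.pure_def, Finset.bind_def, Finset.mem_sup, Finset.mem_singleton, Finset.mem_image,
    Finset.mem_range]
  constructor
  · rintro ⟨t, ⟨a, ha, rfl⟩, h⟩
    exact ⟨a, ha, h⟩
  · rintro ⟨t, ht, h⟩
    exact ⟨(t : ℤ), ⟨t, ht, rfl⟩, h⟩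

lemma inter_Aset (n : ℕ) (J : Finset (ℤ × ℤ)) :
    (J ∩ Aset n).card
      = ((Finset.range n).filter fun t : ℕ =>
          (((t : ℤ) + 1, (t : ℤ) + 1) : ℤ × ℤ) ∈ J).card := by
  have himg : J ∩ Aset n = ((Finset.range n).filter
      fun t : ℕ => (((t : ℤ) + 1, (t : ℤ) + 1) : ℤ × ℤ) ∈ J).image
        (fun t : ℕ => (((t : ℤ) + 1, (t : ℤ) + 1) : ℤ × ℤ)) := by
    ext p
    rw [Finset.mem_inter, mem_Aset, Finset.mem_image]
    constructor
    · rintro ⟨hpJ, t, ht, rfl⟩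
      exact ⟨t, Finset.mem_filter.mpr ⟨Finset.mem_range.mpr ht, hpJ⟩, rfl⟩
    · rintro ⟨t, ht, rfl⟩
      rw [Finset.mem_filter, Finset.mem_range] at ht
      exact ⟨ht.2, t, ht.1, rfl⟩
  rw [himg, Finset.card_image_of_injOn]
  intro a _ b _ hab
  rw [Prod.mk.injEq] at hab
  omega

lemma diag_iff {n k : ℕ} {J : Finset (ℤ × ℤ)} (hJ : IsIdeal n J)
    (hcard : (J ∩ Aset n).card = k) :
    ∀ i : ℤ, ((i, i) ∈ J ↔ 1 ≤ i ∧ i ≤ (k : ℤ)) := by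
  set S : Finset ℕ := (Finset.range n).filter
    (fun t : ℕ => (((t : ℤ) + 1, (t : ℤ) + 1) : ℤ × ℤ) ∈ J) with hSdef
  have hcS : S.card = k := by rw [← hcard, inter_Aset]
  have hdc : ∀ t ∈ S, ∀ t', t' ≤ t → t' ∈ S := by
    intro t ht t' htt'
    rw [hSdef, Finset.mem_filter, Finset.mem_range] at ht ⊢
    refine ⟨by omega, ?_⟩
    refine ideal_closed hJ ht.2 (inP_diag (by omega) (by omega)) ⟨by omega, ?_⟩
    show ordKey n ((t' : ℤ) + 1) ≤ ordKey n ((t : ℤ) + 1)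
    rw [ordKey_diag n _ (by omega), ordKey_diag n _ (by omega)]
    omega
  have hrange : S = Finset.range k := by rw [down_range hdc, hcS]
  intro i
  constructor
  · intro hi
    obtain ⟨h1, h2, _, _⟩ := hJ.1 _ hi
    simp only at h1 h2
    have hmem : (i - 1).toNat ∈ S := by
      rw [hSdef, Finset.mem_filter, Finset.mem_range]
      refine ⟨by omega, ?_⟩
      rw [show ((i - 1).toNat : ℤ) + 1 = i by omega]
      exact hi
    rw [hrange, Finset.mem_range] at hmem
    omega
  · rintro ⟨h1, h2⟩
    have hmem : (i - 1).toNat ∈ S := by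
      rw [hrange, Finset.mem_range]; omega
    rw [hSdef, Finset.mem_filter] at hmem
    have heq : ((i - 1).toNat : ℤ) + 1 = i := by omega
    rw [heq] at hmem
    exact hmem.2

lemma max_unbot'_mem {s : Finset ℤ} (h : s.Nonempty) : WithBot.unbotD 0 s.max ∈ s := by
  rw [← Finset.coe_max' h, WithBot.unbotD_coe]
  exact s.max'_mem h

lemma le_max_unbot' {s : Finset ℤ} {x : ℤ} (hx : x ∈ s) : x ≤ WithBot.unbotD 0 s.max := by
  rw [← Finset.coe_max' ⟨x, hx⟩, WithBot.unbotD_coe]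
  exact Finset.le_max' s x hx

lemma max_unbot'_eq {s : Finset ℤ} {x : ℤ} (hx : x ∈ s) (hub : ∀ y ∈ s, y ≤ x) :
    WithBot.unbotD 0 s.max = x :=
  le_antisymm (hub _ (max_unbot'_mem ⟨x, hx⟩)) (le_max_unbot' hx)

def rowKeys (n : ℕ) (J : Finset (ℤ × ℤ)) (r : ℤ) : Finset ℤ :=
  (J.filter fun p => p.1 = r).image fun p => ordKey n p.2

lemma mem_rowKeys {n : ℕ} {J : Finset (ℤ × ℤ)} {r x : ℤ} :
    x ∈ rowKeys n J r ↔ ∃ p ∈ J, p.1 = r ∧ ordKey n p.2 = x := by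
  simp only [rowKeys, Finset.mem_image, Finset.mem_filter]
  constructor
  · rintro ⟨p, ⟨hp, hr⟩, hk⟩; exact ⟨p, hp, hr, hk⟩
  · rintro ⟨p, hp, hr, hk⟩; exact ⟨p, ⟨hp, hr⟩, hk⟩

def cJ (n k : ℕ) (J : Finset (ℤ × ℤ)) : Fin k → ℤ :=
  fun i => WithBot.unbotD 0 (rowKeys n J ((i : ℤ) + 1)).max

def Jc (n k : ℕ) (c : Fin k → ℤ) : Finset (ℤ × ℤ) :=
  (Pfin n).filter fun p => ∃ i : Fin k, p.1 = (i : ℤ) + 1 ∧ ordKey n p.2 ≤ c i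

section BijSection
variable {n k : ℕ} {J : Finset (ℤ × ℤ)}

lemma cJ_spec (hJ : IsIdeal n J) (hcard : (J ∩ Aset n).card = k) (hkn : k ≤ n) (i : Fin k) :
    ∃ p ∈ J, p.1 = (i : ℤ) + 1 ∧ ordKey n p.2 = cJ n k J i := by
  have hd : (((i : ℤ) + 1, (i : ℤ) + 1) : ℤ × ℤ) ∈ J := by
    rw [diag_iff hJ hcard]
    have := i.isLt
    omega
  have hne : (rowKeys n J ((i : ℤ) + 1)).Nonempty :=
    ⟨ordKey n ((i : ℤ) + 1), mem_rowKeys.mpr ⟨_, hd, rfl, rfl⟩⟩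
  obtain ⟨p, hp, hr, hk'⟩ := mem_rowKeys.mp (max_unbot'_mem hne)
  exact ⟨p, hp, hr, hk'⟩

lemma cJ_antitone (hJ : IsIdeal n J) (hcard : (J ∩ Aset n).card = k) (hkn : k ≤ n)
    (i₁ i₂ : Fin k) (h : i₁ ≤ i₂) : cJ n k J i₂ ≤ cJ n k J i₁ := by
  obtain ⟨p, hp, hr, hk'⟩ := cJ_spec hJ hcard hkn i₂
  obtain ⟨hp1, hp2, hp3, hp4⟩ := hJ.1 _ hp
  have hval : (i₁ : ℕ) ≤ (i₂ : ℕ) := (Fin.le_def).mp h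
  have hq : (((i₁ : ℤ) + 1, p.2) : ℤ × ℤ) ∈ J := by
    have hik := i₁.isLt
    refine ideal_closed hJ hp ⟨?_, ?_, ?_, hp4⟩ ⟨?_, le_rfl⟩
    · show (1 : ℤ) ≤ (i₁ : ℤ) + 1
      omega
    · show (i₁ : ℤ) + 1 ≤ (n : ℤ)
      omega
    · show (i₁ : ℤ) + 1 ≤ |p.2|
      have : p.1 ≤ |p.2| := hp3
      rw [hr] at this
      omega
    · show (i₁ : ℤ) + 1 ≤ p.1
      rw [hr]
      omega
  rw [← hk']
  exact le_max_unbot' (mem_rowKeys.mpr ⟨_, hq, rfl, rfl⟩)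

lemma cJ_bounds (hJ : IsIdeal n J) (hcard : (J ∩ Aset n).card = k) (hkn : k ≤ n) (i : Fin k) :
    (i : ℤ) + 1 ≤ cJ n k J i ∧ cJ n k J i ≤ 2 * (n : ℤ) - (i : ℤ) := by
  obtain ⟨p, hp, hr, hk'⟩ := cJ_spec hJ hcard hkn i
  obtain ⟨hp1, hp2, hp3, hp4⟩ := hJ.1 _ hp
  rw [hr] at hp3
  have habs : 1 ≤ |p.2| := by
    have := i.isLt
    omega
  have := (key_lemma n p.2 ((i : ℤ) + 1) habs hp4).mp hp3
  rw [hk'] at this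
  omega

lemma cJ_mem_Tset (hJ : IsIdeal n J) (hcard : (J ∩ Aset n).card = k) (hk1 : 1 ≤ k)
    (hkn : k ≤ n) : cJ n k J ∈ Tset (2 * (n : ℤ) + 1) k (k : ℤ) := by
  simp only [Tset, Finset.mem_filter, Fintype.mem_piFinset, Finset.mem_Icc]
  obtain ⟨jl, hjl⟩ : ∃ jl : Fin k, (jl : ℕ) = k - 1 := ⟨⟨k - 1, by omega⟩, rfl⟩
  constructor
  · intro i
    have hb := cJ_bounds hJ hcard hkn i
    have hlast : cJ n k J jl ≤ cJ n k J i := by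
      apply cJ_antitone hJ hcard hkn
      rw [Fin.le_def]
      have := i.isLt
      omega
    have hb' := cJ_bounds hJ hcard hkn jl
    constructor
    · omega
    · omega
  · exact fun i₁ i₂ h => cJ_antitone hJ hcard hkn i₁ i₂ h

lemma Jc_isIdeal {c : Fin k → ℤ} (hc : c ∈ Tset (2 * (n : ℤ) + 1) k (k : ℤ)) :
    IsIdeal n (Jc n k c) := by
  simp only [Tset, Finset.mem_filter, Fintype.mem_piFinset, Finset.mem_Icc] at hc
  obtain ⟨hbd, hmono⟩ := hc
  constructor
  · intro p hp
    exact mem_Pfin.mp (Finset.mem_filter.mp hp).1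
  · intro p hp q hq hle
    rw [Jc, Finset.mem_filter] at hp ⊢
    obtain ⟨hpP, i, hpi, hpkey⟩ := hp
    refine ⟨hq, ?_⟩
    obtain ⟨hq1, hq2, hq3, hq4⟩ := mem_Pfin.mp hq
    have hik := i.isLt
    have hle1 := hle.1
    have hle2 := hle.2
    rw [hpi] at hle1
    refine ⟨⟨(q.1 - 1).toNat, by omega⟩, ?_, ?_⟩
    · show q.1 = ((q.1 - 1).toNat : ℤ) + 1
      omega
    · calc ordKey n q.2 ≤ ordKey n p.2 := hle2
        _ ≤ c i := hpkey
        _ ≤ c ⟨(q.1 - 1).toNat, by omega⟩ := by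
            apply hmono
            rw [Fin.le_def]
            show (q.1 - 1).toNat ≤ (i : ℕ)
            omega

lemma Jc_card (hk1 : 1 ≤ k) (hkn : k ≤ n) {c : Fin k → ℤ}
    (hc : c ∈ Tset (2 * (n : ℤ) + 1) k (k : ℤ)) :
    (Jc n k c ∩ Aset n).card = k := by
  simp only [Tset, Finset.mem_filter, Fintype.mem_piFinset, Finset.mem_Icc] at hc
  obtain ⟨hbd, hmono⟩ := hc
  rw [inter_Aset]
  have hfr : (Finset.range n).filter
      (fun t : ℕ => (((t : ℤ) + 1, (t : ℤ) + 1) : ℤ × ℤ) ∈ Jc n k c) = Finset.range k := by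
    ext t
    simp only [Finset.mem_filter, Finset.mem_range]
    constructor
    · rintro ⟨htn, hmem⟩
      rw [Jc, Finset.mem_filter] at hmem
      obtain ⟨_, i, hi1, _⟩ := hmem
      have := i.isLt
      have : ((t : ℤ) + 1, (t : ℤ) + 1).1 = (i : ℤ) + 1 := hi1
      simp only at this
      omega
    · intro htk
      refine ⟨by omega, ?_⟩
      rw [Jc, Finset.mem_filter]
      refine ⟨mem_Pfin.mpr (inP_diag (by omega) (by omega)), ⟨t, htk⟩, ?_, ?_⟩
      · show (t : ℤ) + 1 = ((t : ℕ) : ℤ) + 1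
        rfl
      · show ordKey n ((t : ℤ) + 1) ≤ c ⟨t, htk⟩
        rw [ordKey_diag n _ (by omega)]
        have := (hbd ⟨t, htk⟩).1
        omega
  rw [hfr, Finset.card_range]

lemma right_inv_bij (hk1 : 1 ≤ k) (hkn : k ≤ n) {c : Fin k → ℤ}
    (hc : c ∈ Tset (2 * (n : ℤ) + 1) k (k : ℤ)) :
    cJ n k (Jc n k c) = c := by
  simp only [Tset, Finset.mem_filter, Fintype.mem_piFinset, Finset.mem_Icc] at hc
  obtain ⟨hbd, hmono⟩ := hc
  funext i
  have hik := i.isLt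
  have hbi := hbd i
  unfold cJ
  apply max_unbot'_eq
  · obtain ⟨j0, hj1, hj2, hj3⟩ := exists_key n (c i) (by omega) (by omega)
    have habs : (i : ℤ) + 1 ≤ |j0| := by
      rw [key_lemma n j0 ((i : ℤ) + 1) hj1 hj2, hj3]
      omega
    apply mem_rowKeys.mpr
    refine ⟨(((i : ℤ) + 1, j0) : ℤ × ℤ), ?_, rfl, hj3⟩
    rw [Jc, Finset.mem_filter]
    refine ⟨mem_Pfin.mpr ⟨by show (1:ℤ) ≤ (i:ℤ)+1; omega,
      by show (i:ℤ)+1 ≤ (n:ℤ); omega, habs, hj2⟩, i, rfl, by rw [hj3]⟩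
  · intro y hy
    obtain ⟨p, hp, hr, hk'⟩ := mem_rowKeys.mp hy
    rw [Jc, Finset.mem_filter] at hp
    obtain ⟨_, i', hi'1, hi'2⟩ := hp
    have hii : i' = i := by
      apply Fin.ext
      rw [hi'1] at hr
      have : ((i' : ℕ) : ℤ) = ((i : ℕ) : ℤ) := by omega
      omega
    rw [hii] at hi'2
    rw [← hk']
    exact hi'2

lemma left_inv_bij (hJ : IsIdeal n J) (hcard : (J ∩ Aset n).card = k) (hkn : k ≤ n) :
    Jc n k (cJ n k J) = J := by
  ext p
  rw [Jc, Finset.mem_filter]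
  constructor
  · rintro ⟨hpP, i, hpi, hpkey⟩
    obtain ⟨p0, hp0, hr0, hk0⟩ := cJ_spec hJ hcard hkn i
    refine ideal_closed hJ hp0 (mem_Pfin.mp hpP) ⟨?_, ?_⟩
    · rw [hpi, hr0]
    · rw [hk0]
      exact hpkey
  · intro hp
    obtain ⟨h1, h2, h3, h4⟩ := hJ.1 _ hp
    refine ⟨mem_Pfin.mpr ⟨h1, h2, h3, h4⟩, ?_⟩
    have habs : 1 ≤ |p.2| := by omega
    have hdiag : (p.1, p.1) ∈ J := by
      refine ideal_closed hJ hp (inP_diag h1 h2) ⟨le_rfl, ?_⟩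
      show ordKey n p.1 ≤ ordKey n p.2
      rw [ordKey_diag n p.1 (by omega)]
      exact ((key_lemma n p.2 p.1 habs h4).mp h3).1
    have hpk : p.1 ≤ (k : ℤ) := ((diag_iff hJ hcard p.1).mp hdiag).2
    refine ⟨⟨(p.1 - 1).toNat, by omega⟩, ?_, ?_⟩
    · show p.1 = ((p.1 - 1).toNat : ℤ) + 1
      omega
    · apply le_max_unbot'
      refine mem_rowKeys.mpr ⟨p, hp, ?_, rfl⟩
      show p.1 = ((p.1 - 1).toNat : ℤ) + 1
      omega

end BijSection

/-- For `k ∈ [1,n]`, the number of order ideals `J` of `P` with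
`|J ∩ A| = k` equals `C(2n,k) − C(2n,k−2)`. -/
theorem stmt1 (n k : ℕ) (hn : 1 ≤ n) (hk1 : 1 ≤ k) (hkn : k ≤ n) :
    (((((Pfin n).powerset).filter fun J => IsIdeal n J ∧ (J ∩ Aset n).card = k).card : ℤ))
      = ((2 * n).choose k : ℤ) - (if 2 ≤ k then ((2 * n).choose (k - 2) : ℤ) else 0) := by
  have hbij : ((((Pfin n).powerset).filter fun J => IsIdeal n J ∧ (J ∩ Aset n).card = k).card)
      = (Tset (2 * (n : ℤ) + 1) k (k : ℤ)).card := by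
    refine Finset.card_bij' (fun J _ => cJ n k J) (fun c _ => Jc n k c) ?_ ?_ ?_ ?_
    · intro J hJ'
      rw [Finset.mem_filter] at hJ'
      exact cJ_mem_Tset hJ'.2.1 hJ'.2.2 hk1 hkn
    · intro c hc
      rw [Finset.mem_filter, Finset.mem_powerset]
      exact ⟨Finset.filter_subset _ _, Jc_isIdeal hc, Jc_card hk1 hkn hc⟩
    · intro J hJ'
      rw [Finset.mem_filter] at hJ'
      exact left_inv_bij hJ'.2.1 hJ'.2.2 hkn
    · intro c hc
      exact right_inv_bij hk1 hkn hc
  rw [hbij]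
  rw [Tcard k (2 * (n : ℤ) + 1) (k : ℤ) (by omega)]
  unfold V
  rw [show (2 * (n : ℤ) + 1 - (k : ℤ)).toNat + k - 1 = 2 * n by omega]

end
end

section
/- Let O ⊆ P contain A. For every fixed i ∈ [1,n], the map j ↦ r(i,j) is a bijection from [i,n] ∪ [−n,−i] to itself. -/
open scoped Classical Pointwise

noncomputable section

namespace S3

lemma jList_eq (n : ℕ) : jList n = ((List.range n).map fun t : ℕ => (t : ℤ) + 1)
    ++ ((List.range n).map fun t : ℕ => (t : ℤ) - n) := by
  rw [jList]
  rw [show (((List.range n : List ℕ) : List ℤ)) = (List.range n).map (fun a : ℕ => (a:ℤ)) from by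
    induction (List.range n) with
    | nil => rfl
    | cons b t ih => simp_all [List.flatMap_cons]]
  rw [List.map_map, List.map_map]
  rfl

lemma mem_jList {n : ℕ} {b : ℤ} :
    b ∈ jList n ↔ (1 ≤ b ∧ b ≤ (n:ℤ)) ∨ (-(n:ℤ) ≤ b ∧ b ≤ -1) := by
  rw [jList_eq]
  constructor
  · intro h
    rcases List.mem_append.mp h with h | h <;>
      obtain ⟨t, ht, rfl⟩ := List.mem_map.mp h <;> rw [List.mem_range] at ht
    · left; omega
    · right; omega
  · rintro (⟨h1, h2⟩ | ⟨h1, h2⟩)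
    · exact List.mem_append.mpr (Or.inl (List.mem_map.mpr
        ⟨(b - 1).toNat, List.mem_range.mpr (by omega), by omega⟩))
    · exact List.mem_append.mpr (Or.inr (List.mem_map.mpr
        ⟨(b + n).toNat, List.mem_range.mpr (by omega), by omega⟩))

lemma jList_pairwise (n : ℕ) :
    (jList n).Pairwise (fun x y => ordKey n x < ordKey n y) := by
  rw [jList_eq, List.pairwise_append]
  refine ⟨List.pairwise_map.mpr ?_, List.pairwise_map.mpr ?_, ?_⟩
  · refine List.Pairwise.imp_of_mem ?_ List.pairwise_lt_range
    intro a b ha hb h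
    rw [List.mem_range] at ha hb
    simp only [ordKey]; split_ifs <;> omega
  · refine List.Pairwise.imp_of_mem ?_ List.pairwise_lt_range
    intro a b ha hb h
    rw [List.mem_range] at ha hb
    simp only [ordKey]; split_ifs <;> omega
  · rintro x hx y hy
    obtain ⟨t, ht, rfl⟩ := List.mem_map.mp hx
    obtain ⟨s, hs, rfl⟩ := List.mem_map.mp hy
    rw [List.mem_range] at ht hs
    simp only [ordKey]; split_ifs <;> omega

lemma jList_nodup (n : ℕ) : (jList n).Nodup :=
  (jList_pairwise n).imp (fun {a b} h => by rintro rfl; omega)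

lemma coe_range_eq (n : ℕ) :
    (((List.range n : List ℕ) : List ℤ)) = (List.range n).map (fun a : ℕ => (a:ℤ)) := by
  induction (List.range n) with
  | nil => rfl
  | cons b t ih => simp_all [List.flatMap_cons]

lemma mem_posList {n : ℕ} {p : ℤ × ℤ} :
    p ∈ posList n ↔ 1 ≤ p.1 ∧ p.1 ≤ (n:ℤ) ∧ p.2 ∈ jList n := by
  constructor
  · intro h
    obtain ⟨a, ha, hm⟩ := List.mem_flatMap.mp h
    obtain ⟨j, hj, rfl⟩ := List.mem_map.mp hm
    rw [coe_range_eq, List.mem_map] at ha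
    obtain ⟨t, ht, rfl⟩ := ha
    rw [List.mem_range] at ht
    refine ⟨by simp <;> omega, by simp <;> omega, by simpa using hj⟩
  · rintro ⟨h1, h2, hj⟩
    refine List.mem_flatMap.mpr ⟨p.1 - 1, by
      rw [coe_range_eq, List.mem_map]
      exact ⟨(p.1 - 1).toNat, List.mem_range.mpr (by omega), by omega⟩,
      List.mem_map.mpr ⟨p.2, hj, ?_⟩⟩
    obtain ⟨pa, pb⟩ := p
    simp only at h1 h2 ⊢
    congr 1
    omega

lemma mem_Pfin {n : ℕ} {p : ℤ × ℤ} : p ∈ Pfin n ↔ inP n p := by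
  simp only [Pfin, Finset.mem_filter, List.mem_toFinset]
  constructor
  · exact fun h => h.2
  · intro h
    obtain ⟨h1, h2, h3, h4⟩ := h
    refine ⟨mem_posList.mpr ⟨h1, h2, mem_jList.mpr ?_⟩, h1, h2, h3, h4⟩
    rcases abs_cases p.2 with ⟨he, hp⟩ | ⟨he, hp⟩
    · left; omega
    · right; omega

lemma ordKey_inj {n : ℕ} {x y : ℤ} (hx1 : 1 ≤ |x|) (hx2 : |x| ≤ (n:ℤ))
    (hy1 : 1 ≤ |y|) (hy2 : |y| ≤ (n:ℤ)) (h : ordKey n x = ordKey n y) : x = y := by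
  rcases abs_cases x with ⟨hex, _⟩ | ⟨hex, _⟩ <;> rcases abs_cases y with ⟨hey, _⟩ | ⟨hey, _⟩ <;>
    simp only [ordKey] at h <;> split_ifs at h <;> omega

lemma ordKey_ge_row {n : ℕ} {a b : ℤ} (h : inP n (a, b)) : a ≤ ordKey n b := by
  obtain ⟨h1, h2, h3, h4⟩ := h
  simp only at h1 h2 h3 h4
  rcases abs_cases b with ⟨he, hp⟩ | ⟨he, hp⟩ <;> simp only [ordKey] <;> split_ifs <;> omega

lemma ordKey_ge_of_mem {n : ℕ} {i j : ℤ} (hj1 : i ≤ |j|) (hj2 : |j| ≤ (n:ℤ))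
    (hin : i ≤ (n:ℤ)) : i ≤ ordKey n j := by
  rcases abs_cases j with ⟨he, hp⟩ | ⟨he, hp⟩ <;> simp only [ordKey] <;> split_ifs <;> omega

lemma mem_jList_bounds {n : ℕ} {b : ℤ} (h : b ∈ jList n) : 1 ≤ |b| ∧ |b| ≤ (n:ℤ) := by
  rcases mem_jList.mp h with ⟨h1, h2⟩ | ⟨h1, h2⟩ <;>
    rcases abs_cases b with ⟨he, hp⟩ | ⟨he, hp⟩ <;> constructor <;> omega

lemma prod_swap_fix (a x : ℤ) : ∀ (l : List ℤ), x ≠ a → (∀ b ∈ l, x ≠ b) →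
    ((l.map fun b => Equiv.swap a b).prod) x = x := by
  intro l hxa hl
  induction l with
  | nil => simp
  | cons b t ih =>
    simp only [List.map_cons, List.prod_cons, Equiv.Perm.mul_apply]
    rw [ih (fun c hc => hl c (List.mem_cons_of_mem _ hc))]
    exact Equiv.swap_apply_of_ne_of_ne hxa (hl b (List.mem_cons_self))

lemma prod_swap_mem (a x : ℤ) (l : List ℤ) :
    ((l.map fun b => Equiv.swap a b).prod) x = x ∨
    ((l.map fun b => Equiv.swap a b).prod) x = a ∨
    ((l.map fun b => Equiv.swap a b).prod) x ∈ l := by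
  induction l with
  | nil => simp
  | cons b t ih =>
    simp only [List.map_cons, List.prod_cons, Equiv.Perm.mul_apply]
    rcases ih with h | h | h <;> rw [Equiv.swap_apply_def] <;> split_ifs <;>
      simp_all [List.mem_cons]

lemma prod_swap_eval (a j : ℤ) (l : List ℤ) (hj : j ≠ a) (hl : ∀ b ∈ l, j ≠ b) :
    (((l ++ [j]).map fun b => Equiv.swap a b).prod) a = j := by
  rw [List.map_append, List.prod_append]
  simp only [List.map_cons, List.map_nil, List.prod_cons, List.prod_nil, mul_one,
    Equiv.Perm.mul_apply, Equiv.swap_apply_left]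
  exact prod_swap_fix a j l hj hl

lemma sorted_split {n : ℕ} (c : ℤ) : ∀ (l : List ℤ),
    l.Pairwise (fun x y => ordKey n x < ordKey n y) →
    l = l.filter (fun b => decide (ordKey n b ≤ c)) ++ l.filter (fun b => decide (c < ordKey n b)) := by
  intro l hl
  induction l with
  | nil => rfl
  | cons b t ih =>
    rw [List.pairwise_cons] at hl
    by_cases hb : ordKey n b ≤ c
    · rw [List.filter_cons_of_pos (by simpa using hb),
        List.filter_cons_of_neg (by simpa using hb)]
      rw [List.cons_append]
      exact congrArg _ (ih hl.2)
    · rw [List.filter_cons_of_neg (by simpa using hb),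
        List.filter_cons_of_pos (by simp; omega)]
      have h1 : t.filter (fun b => decide (ordKey n b ≤ c)) = [] :=
        List.filter_eq_nil_iff.mpr (fun x hx => by
          have := hl.1 x hx; simp; omega)
      have h2 := ih hl.2
      rw [h1] at h2
      rw [h1, List.nil_append]
      exact congrArg _ (by simpa using h2)

lemma filter_eq_singleton {j : ℤ} : ∀ (l : List ℤ), l.Nodup → j ∈ l →
    l.filter (fun b => decide (b = j)) = [j] := by
  intro l hn hj
  induction l with
  | nil => simp at hj
  | cons b t ih =>
    rw [List.nodup_cons] at hn
    rcases List.mem_cons.mp hj with rfl | hj'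
    · rw [List.filter_cons_of_pos (by simp)]
      have : t.filter (fun b => decide (b = j)) = [] :=
        List.filter_eq_nil_iff.mpr (fun x hx => by
          simp only [decide_eq_true_eq]
          rintro rfl; exact hn.1 hx)
      rw [this]
    · have hbj : b ≠ j := fun e => hn.1 (e ▸ hj')
      rw [List.filter_cons_of_neg (by simpa using hbj)]
      exact ih hn.2 hj'

lemma mem_princ {n : ℕ} {i j : ℤ} {q : ℤ × ℤ} :
    q ∈ princ n (i, j) ↔ inP n q ∧ q.1 ≤ i ∧ ordKey n q.2 ≤ ordKey n j := by
  rw [princ, Finset.mem_filter, mem_Pfin]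
  exact Iff.rfl

lemma ordKey_cases (n : ℕ) (x : ℤ) :
    (0 < x ∧ ordKey n x = x) ∨ (x ≤ 0 ∧ ordKey n x = 2*n+1+x) := by
  simp only [ordKey]; split_ifs with h
  · exact Or.inl ⟨h, rfl⟩
  · exact Or.inr ⟨by omega, rfl⟩

lemma maxPrec_princ {n : ℕ} {i j : ℤ} (hi1 : 1 ≤ i) (hin : i ≤ (n:ℤ))
    (hj1 : i ≤ |j|) (hj2 : |j| ≤ (n:ℤ)) :
    maxPrec n (princ n (i, j)) = {(i, j)} := by
  have hiP : inP n (i, j) := ⟨hi1, hin, hj1, hj2⟩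
  have hoj : i ≤ ordKey n j := ordKey_ge_of_mem hj1 hj2 hin
  have hjc := ordKey_cases n j
  have hjabs := abs_cases j
  ext ⟨a, b⟩
  simp only [maxPrec, Finset.mem_filter, mem_princ, Finset.mem_singleton]
  constructor
  · rintro ⟨⟨hP, hai, hbj⟩, hmax⟩
    obtain ⟨h1, h2, h3, h4⟩ := hP
    simp only at h1 h2 h3 h4 hai hbj ⊢
    have hmax' : ∀ c d : ℤ, 1 ≤ c → c ≤ (n:ℤ) → c ≤ |d| → |d| ≤ (n:ℤ) →
        c ≤ i → ordKey n d ≤ ordKey n j → a ≤ c → ordKey n b ≤ ordKey n d →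
        c = a ∧ d = b := by
      intro c d q1 q2 q3 q4 q5 q6 q7 q8
      have := hmax (c, d) ⟨⟨q1, q2, q3, q4⟩, q5, q6⟩ ⟨q7, q8⟩
      exact ⟨congrArg Prod.fst this, congrArg Prod.snd this⟩
    by_contra hne
    have hbc := ordKey_cases n b
    have hbabs := abs_cases b
    rcases lt_or_eq_of_le hai with hlt | rfl
    · -- a < i
      rcases lt_or_eq_of_le h3 with h3' | h3'
      · -- a < |b| : go up a row
        have := hmax' (a+1) b (by omega) (by omega) (by omega) h4 (by omega) hbj
          (by omega) (le_refl _)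
        omega
      · -- |b| = a
        rcases hbabs with ⟨he, hp⟩ | ⟨he, hp⟩
        · -- b = a : move right to a+1
          have hsc := ordKey_cases n (b + 1)
          have hs1 : |b + 1| = b + 1 := abs_of_pos (by omega)
          have := hmax' a (b+1) h1 h2 (by omega) (by omega)
            (by omega)
            (by rcases hsc with ⟨u,v⟩|⟨u,v⟩ <;> rcases hjc with ⟨w,z⟩|⟨w,z⟩ <;> omega)
            (le_refl _)
            (by rcases hsc with ⟨u,v⟩|⟨u,v⟩ <;> rcases hbc with ⟨w,z⟩|⟨w,z⟩ <;> omega)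
          omega
        · -- b = -a : impossible
          rcases hbc with ⟨u,v⟩|⟨u,v⟩ <;> rcases hjc with ⟨w,z⟩|⟨w,z⟩ <;>
            rcases hjabs with ⟨q,r⟩|⟨q,r⟩ <;> omega
    · -- a = i, show b = j
      rcases eq_or_ne b j with rfl | hbj'
      · exact absurd rfl hne
      have hblt : ordKey n b < ordKey n j :=
        lt_of_le_of_ne hbj (fun e => hbj' (ordKey_inj (by omega) h4 (by omega) hj2 e))
      rcases hbc with ⟨u,v⟩|⟨u,v⟩
      · -- b > 0
        rcases lt_or_eq_of_le h4 with hbn | hbn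
        · -- 0 < b < n : successor b+1
          have hsc := ordKey_cases n (b + 1)
          have hs1 : |b + 1| = b + 1 := abs_of_pos (by omega)
          have := hmax' a (b+1) h1 h2 (by omega) (by omega) hai
            (by rcases hsc with ⟨u',v'⟩|⟨u',v'⟩ <;> rcases hjc with ⟨w,z⟩|⟨w,z⟩ <;> omega)
            (le_refl _)
            (by rcases hsc with ⟨u',v'⟩|⟨u',v'⟩ <;> omega)
          omega
        · -- b = n : successor -n
          have hsc := ordKey_cases n (-(n:ℤ))
          have hs1 : |-(n:ℤ)| = (n:ℤ) := by rw [abs_neg, abs_of_nonneg]; omega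
          have := hmax' a (-(n:ℤ)) h1 h2 (by omega) (by omega) hai
            (by rcases hsc with ⟨u',v'⟩|⟨u',v'⟩ <;> rcases hjc with ⟨w,z⟩|⟨w,z⟩ <;>
              rcases hjabs with ⟨q,r⟩|⟨q,r⟩ <;> omega)
            (le_refl _)
            (by rcases hsc with ⟨u',v'⟩|⟨u',v'⟩ <;> omega)
          omega
      · -- b < 0 : successor b+1
        have hjneg : j < 0 := by rcases hjc with ⟨w,z⟩|⟨w,z⟩ <;> rcases hjabs with ⟨q,r⟩|⟨q,r⟩ <;> omega
        have hbj2 : b < j := by rcases hjc with ⟨w,z⟩|⟨w,z⟩ <;> omega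
        have hsc := ordKey_cases n (b + 1)
        have habs : |b| = -b := abs_of_neg (by omega)
        have hs1 : |b + 1| = -(b+1) := abs_of_nonpos (by omega)
        have := hmax' a (b+1) h1 h2 (by omega) (by omega) hai
          (by rcases hsc with ⟨u',v'⟩|⟨u',v'⟩ <;> rcases hjc with ⟨w,z⟩|⟨w,z⟩ <;> omega)
          (le_refl _)
          (by rcases hsc with ⟨u',v'⟩|⟨u',v'⟩ <;> omega)
        omega
  · intro h
    rw [Prod.mk.injEq] at h
    obtain ⟨rfl, rfl⟩ := h
    refine ⟨⟨hiP, le_refl _, le_refl _⟩, ?_⟩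
    rintro ⟨c, d⟩ ⟨hPq, hc, hd⟩ ⟨hc', hd'⟩
    simp only at hc hd hc' hd' ⊢
    obtain ⟨g1, g2, g3, g4⟩ := hPq
    simp only at g1 g2 g3 g4
    have hd2 := ordKey_inj (by omega) g4 (by omega) hj2 (le_antisymm hd hd')
    have hc2 := le_antisymm hc hc'
    simp [hc2, hd2]

def rowList (n : ℕ) (a : ℤ) (M : Finset (ℤ × ℤ)) : List ℤ :=
  (jList n).filter fun b => decide ((a, b) ∈ M)

def rowPerm (n : ℕ) (a : ℤ) (M : Finset (ℤ × ℤ)) : Equiv.Perm ℤ :=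
  ((rowList n a M).map fun b => Equiv.swap a b).prod

lemma prod_filter_flatMap (n : ℕ) (M : Finset (ℤ × ℤ)) : ∀ L : List ℕ,
    (((L.flatMap fun a => (jList n).map fun j => ((a:ℤ)+1, j)).filter
        fun p => decide (p ∈ M)).map fun p => Equiv.swap p.1 p.2).prod =
      (L.map fun t : ℕ => rowPerm n ((t:ℤ)+1) M).prod := by
  intro L
  induction L with
  | nil => rfl
  | cons a L ih =>
    rw [show ((a :: L : List ℕ) : List ℤ) = (a:ℤ) :: (L : List ℤ) from rfl,
      List.flatMap_cons, List.filter_append, List.map_append, List.prod_append, ih,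
      List.map_cons, List.prod_cons]
    congr 1
    rw [List.filter_map, List.map_map]
    rfl

lemma wPerm_rows (n : ℕ) (M : Finset (ℤ × ℤ)) :
    wPerm n M = ((List.range n).map fun t : ℕ => rowPerm n ((t:ℤ)+1) M).prod := by
  rw [wPerm, posList]
  exact prod_filter_flatMap n M (List.range n)

lemma mem_M {n : ℕ} {O : Finset (ℤ × ℤ)} {i j : ℤ} (hO : O ⊆ Pfin n)
    (hi1 : 1 ≤ i) (hin : i ≤ (n:ℤ)) (hj1 : i ≤ |j|) (hj2 : |j| ≤ (n:ℤ)) (p : ℤ × ℤ) :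
    p ∈ MO n O (princ n (i, j)) ↔
      (p.1 ≤ i ∧ ordKey n p.2 ≤ ordKey n j ∧ p ∈ O) ∨ p = (i, j) := by
  rw [MO, Finset.mem_union, Finset.mem_inter, maxPrec_princ hi1 hin hj1 hj2,
    Finset.mem_singleton, mem_princ]
  constructor
  · rintro (⟨⟨hP, h1, h2⟩, hO'⟩ | h)
    · exact Or.inl ⟨h1, h2, hO'⟩
    · exact Or.inr h
  · rintro (⟨h1, h2, hO'⟩ | h)
    · exact Or.inl ⟨⟨mem_Pfin.mp (hO hO'), h1, h2⟩, hO'⟩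
    · exact Or.inr h

section Rows

variable {n : ℕ} {O : Finset (ℤ × ℤ)} {i j : ℤ}

lemma rowList_lower (hO : O ⊆ Pfin n) (hi1 : 1 ≤ i) (hin : i ≤ (n:ℤ))
    (hj1 : i ≤ |j|) (hj2 : |j| ≤ (n:ℤ)) {a : ℤ} (ha : a < i) :
    rowList n a (MO n O (princ n (i, j))) =
      (rowList n a O).filter (fun b => decide (ordKey n b ≤ ordKey n j)) := by
  rw [rowList, rowList, List.filter_filter]
  apply List.filter_congr
  intro b hb
  rw [Bool.eq_iff_iff]
  simp only [Bool.and_eq_true, decide_eq_true_eq, mem_M hO hi1 hin hj1 hj2, Prod.mk.injEq]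
  constructor
  · rintro (⟨h1, h2, h3⟩ | ⟨h1, h2⟩)
    · exact ⟨h2, h3⟩
    · omega
  · rintro ⟨h1, h2⟩
    exact Or.inl ⟨by omega, h1, h2⟩

lemma rowList_upper (hO : O ⊆ Pfin n) (hi1 : 1 ≤ i) (hin : i ≤ (n:ℤ))
    (hj1 : i ≤ |j|) (hj2 : |j| ≤ (n:ℤ)) {a : ℤ} (ha : i < a) :
    rowList n a (MO n O (princ n (i, j))) = [] := by
  rw [rowList]
  apply List.filter_eq_nil_iff.mpr
  intro b hb
  simp only [decide_eq_true_eq, mem_M hO hi1 hin hj1 hj2, Prod.mk.injEq]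
  push_neg
  exact ⟨fun h1 => absurd h1 (by omega), fun h1 => absurd h1 (by omega)⟩

lemma mem_jList_of (hj1 : i ≤ |j|) (hj2 : |j| ≤ (n:ℤ)) (hi1 : 1 ≤ i) : j ∈ jList n := by
  apply mem_jList.mpr
  rcases abs_cases j with ⟨he, hp⟩ | ⟨he, hp⟩
  · left; omega
  · right; omega

lemma rowList_row_i (hO : O ⊆ Pfin n) (hi1 : 1 ≤ i) (hin : i ≤ (n:ℤ))
    (hj1 : i ≤ |j|) (hj2 : |j| ≤ (n:ℤ)) :
    rowList n i (MO n O (princ n (i, j))) =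
      ((jList n).filter (fun b => decide ((i, b) ∈ O ∧ ordKey n b < ordKey n j))) ++ [j] := by
  have hsplit := sorted_split (n := n) (ordKey n j - 1) (jList n) (jList_pairwise n)
  rw [rowList]
  conv_lhs => rw [hsplit]
  rw [List.filter_append, List.filter_filter, List.filter_filter]
  congr 1
  · apply List.filter_congr
    intro b hb
    obtain ⟨hb1, hb2⟩ := mem_jList_bounds hb
    rw [Bool.eq_iff_iff]
    simp only [Bool.and_eq_true, decide_eq_true_eq, mem_M hO hi1 hin hj1 hj2, Prod.mk.injEq]
    constructor
    · rintro ⟨(⟨h1, h2, h3⟩ | ⟨h1, rfl⟩), h4⟩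
      · exact ⟨h3, by omega⟩
      · omega
    · rintro ⟨h1, h2⟩
      exact ⟨Or.inl ⟨le_refl _, by omega, h1⟩, by omega⟩
  · rw [show ((jList n).filter fun b =>
        decide ((i, b) ∈ (MO n O (princ n (i, j)))) && decide (ordKey n j - 1 < ordKey n b)) =
        (jList n).filter (fun b => decide (b = j)) from ?_]
    · exact filter_eq_singleton (jList n) (jList_nodup n) (mem_jList_of hj1 hj2 hi1)
    apply List.filter_congr
    intro b hb
    obtain ⟨hb1, hb2⟩ := mem_jList_bounds hb
    rw [Bool.eq_iff_iff]
    simp only [Bool.and_eq_true, decide_eq_true_eq, mem_M hO hi1 hin hj1 hj2, Prod.mk.injEq]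
    constructor
    · rintro ⟨(⟨h1, h2, h3⟩ | ⟨h1, h2⟩), h4⟩
      · exact ordKey_inj hb1 hb2 (by omega) hj2 (by omega)
      · exact h2
    · rintro rfl
      exact ⟨Or.inr (by simp), by omega⟩

lemma rowPerm_row_i (hO : O ⊆ Pfin n) (hi1 : 1 ≤ i) (hin : i ≤ (n:ℤ))
    (hj1 : i ≤ |j|) (hj2 : |j| ≤ (n:ℤ)) :
    rowPerm n i (MO n O (princ n (i, j))) i = j := by
  rw [rowPerm, rowList_row_i hO hi1 hin hj1 hj2]
  rcases eq_or_ne j i with rfl | hne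
  · have hLp : ((jList n).filter (fun b => decide ((j, b) ∈ O ∧ ordKey n b < ordKey n j))) = [] := by
      apply List.filter_eq_nil_iff.mpr
      intro b hb
      simp only [decide_eq_true_eq]
      rintro ⟨h1, h2⟩
      have := ordKey_ge_row (mem_Pfin.mp (hO h1))
      have hoj := ordKey_cases n j
      rcases hoj with ⟨u, v⟩ | ⟨u, v⟩ <;> omega
    rw [hLp]
    simp
  · apply prod_swap_eval i j _ hne
    intro b hb
    rw [List.mem_filter] at hb
    have := hb.2
    simp only [decide_eq_true_eq] at this
    intro e
    subst e
    exact absurd this.2 (lt_irrefl _)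

end Rows

section Steps

variable {n : ℕ} {O : Finset (ℤ × ℤ)} {i j : ℤ}

lemma row_step (hO : O ⊆ Pfin n) (hi1 : 1 ≤ i) (hin : i ≤ (n:ℤ))
    (hj1 : i ≤ |j|) (hj2 : |j| ≤ (n:ℤ)) {a v : ℤ} (ha1 : 1 ≤ a) (hai : a < i)
    (hv1 : a < ordKey n v) (hv2 : ordKey n v ≤ ordKey n j) :
    rowPerm n a (MO n O (princ n (i, j))) v = rowPerm n a O v ∧
    a ≤ ordKey n (rowPerm n a (MO n O (princ n (i, j))) v) ∧
    ordKey n (rowPerm n a (MO n O (princ n (i, j))) v) ≤ ordKey n j := by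
  have hsp := sorted_split (n := n) (ordKey n j) (rowList n a O)
    (List.Pairwise.filter _ (jList_pairwise n))
  have hva : v ≠ a := by
    have := ordKey_cases n a
    rintro rfl
    rcases this with ⟨u, w⟩ | ⟨u, w⟩ <;> omega
  have hOeq : rowPerm n a O v =
      (((rowList n a O).filter (fun b => decide (ordKey n b ≤ ordKey n j))).map
        fun b => Equiv.swap a b).prod v := by
    rw [rowPerm]
    conv_lhs => rw [hsp]
    rw [List.map_append, List.prod_append, Equiv.Perm.mul_apply]
    congr 1
    apply prod_swap_fix a v _ hva
    intro b hb
    rw [List.mem_filter] at hb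
    have := hb.2
    simp only [decide_eq_true_eq] at this
    intro e
    subst e
    omega
  have hMeq : rowPerm n a (MO n O (princ n (i, j))) v =
      (((rowList n a O).filter (fun b => decide (ordKey n b ≤ ordKey n j))).map
        fun b => Equiv.swap a b).prod v := by
    rw [rowPerm, rowList_lower hO hi1 hin hj1 hj2 hai]
  have hbounds : a ≤ ordKey n ((((rowList n a O).filter
        (fun b => decide (ordKey n b ≤ ordKey n j))).map fun b => Equiv.swap a b).prod v) ∧
      ordKey n ((((rowList n a O).filter
        (fun b => decide (ordKey n b ≤ ordKey n j))).map fun b => Equiv.swap a b).prod v)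
        ≤ ordKey n j := by
    rcases prod_swap_mem a v ((rowList n a O).filter
      (fun b => decide (ordKey n b ≤ ordKey n j))) with h | h | h
    · rw [h]; omega
    · rw [h]
      have := ordKey_cases n a
      have hoj : i ≤ ordKey n j := ordKey_ge_of_mem hj1 hj2 hin
      rcases this with ⟨u, w⟩ | ⟨u, w⟩ <;> omega
    · obtain ⟨h1, h2⟩ := List.mem_filter.mp h
      simp only [decide_eq_true_eq] at h2
      obtain ⟨h3, h4⟩ := List.mem_filter.mp h1
      simp only [decide_eq_true_eq] at h4
      have := ordKey_ge_row (mem_Pfin.mp (hO h4))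
      omega
  exact ⟨by rw [hMeq, hOeq], by rw [hMeq]; exact hbounds.1, by rw [hMeq]; exact hbounds.2⟩

lemma lo_eq (hO : O ⊆ Pfin n) (hi1 : 1 ≤ i) (hin : i ≤ (n:ℤ))
    (hj1 : i ≤ |j|) (hj2 : |j| ≤ (n:ℤ)) : ∀ (m : ℕ), (m:ℤ) < i → ∀ v : ℤ,
    (m:ℤ) < ordKey n v → ordKey n v ≤ ordKey n j →
    ((List.range m).map fun t : ℕ => rowPerm n ((t:ℤ)+1) (MO n O (princ n (i, j)))).prod v =
    ((List.range m).map fun t : ℕ => rowPerm n ((t:ℤ)+1) O).prod v := by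
  intro m
  induction m with
  | zero => intro _ v _ _; rfl
  | succ m ih =>
    intro hmi v hv1 hv2
    rw [List.range_succ, List.map_append, List.map_append, List.prod_append, List.prod_append]
    simp only [List.map_cons, List.map_nil, List.prod_cons, List.prod_nil, mul_one,
      Equiv.Perm.mul_apply]
    have hcast : ((m:ℤ)) + 1 = ((m+1 : ℕ) : ℤ) := by push_cast; ring
    obtain ⟨he, hb1, hb2⟩ := row_step hO hi1 hin hj1 hj2 (a := (m:ℤ)+1) (v := v)
      (by omega) (by push_cast at hmi ⊢; omega) (by push_cast at hv1 ⊢; omega) hv2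
    rw [he]
    exact ih (by push_cast at hmi ⊢; omega) _ (by rw [← he]; omega) (by rw [← he]; exact hb2)

end Steps

def hiPerm (n : ℕ) (O : Finset (ℤ × ℤ)) (i : ℤ) : Equiv.Perm ℤ :=
  ((List.range (n - (i-1).toNat)).map fun t : ℕ => rowPerm n (i + (t:ℤ)) O).prod

section Assembly

variable {n : ℕ} {O : Finset (ℤ × ℤ)} {i j : ℤ}

lemma wPerm_split (hi1 : 1 ≤ i) (hin : i ≤ (n:ℤ)) (X : Finset (ℤ × ℤ)) :
    wPerm n X = ((List.range (i-1).toNat).map fun t : ℕ => rowPerm n ((t:ℤ)+1) X).prod *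
      ((List.range (n - (i-1).toNat)).map fun t : ℕ => rowPerm n (i + (t:ℤ)) X).prod := by
  have hk : (((i-1).toNat : ℕ) : ℤ) = i - 1 := by omega
  rw [wPerm_rows, show List.range n = List.range ((i-1).toNat) ++
      (List.range (n - (i-1).toNat)).map (fun x => (i-1).toNat + x) from by
    rw [← List.range_add]
    congr 1
    omega]
  rw [List.map_append, List.prod_append, List.map_map]
  congr 2
  apply List.map_congr_left
  intro t ht
  simp only [Function.comp_apply]
  congr 1
  push_cast
  omega

lemma hiPerm_M (hO : O ⊆ Pfin n) (hi1 : 1 ≤ i) (hin : i ≤ (n:ℤ))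
    (hj1 : i ≤ |j|) (hj2 : |j| ≤ (n:ℤ)) :
    ((List.range (n - (i-1).toNat)).map fun t : ℕ =>
      rowPerm n (i + (t:ℤ)) (MO n O (princ n (i, j)))).prod =
      rowPerm n i (MO n O (princ n (i, j))) := by
  have h1 : n - (i-1).toNat = (n - (i-1).toNat - 1) + 1 := by omega
  rw [h1, List.range_succ_eq_map, List.map_cons, List.prod_cons, List.map_map]
  rw [List.prod_eq_one, mul_one]
  · norm_num
  · intro x hx
    obtain ⟨t, ht, rfl⟩ := List.mem_map.mp hx
    simp only [Function.comp_apply]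
    rw [rowPerm, rowList_upper hO hi1 hin hj1 hj2 (by push_cast; omega)]
    rfl

lemma perm_inv_apply_self (f : Equiv.Perm ℤ) (x : ℤ) : f⁻¹ (f x) = x := f.symm_apply_apply x

lemma rMap_eq (hO : O ⊆ Pfin n) (hi1 : 1 ≤ i) (hin : i ≤ (n:ℤ))
    (hj1 : i ≤ |j|) (hj2 : |j| ≤ (n:ℤ)) :
    rMap n O i j = (hiPerm n O i)⁻¹ j := by
  have hoj : i ≤ ordKey n j := ordKey_ge_of_mem hj1 hj2 hin
  rw [rMap, wOJ, Equiv.Perm.mul_apply]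
  rw [wPerm_split hi1 hin (MO n O (princ n (i, j))), hiPerm_M hO hi1 hin hj1 hj2,
    Equiv.Perm.mul_apply, rowPerm_row_i hO hi1 hin hj1 hj2]
  rw [lo_eq hO hi1 hin hj1 hj2 (i-1).toNat (by omega) j (by omega) (le_refl _)]
  rw [wPerm_split hi1 hin O, mul_inv_rev, Equiv.Perm.mul_apply, perm_inv_apply_self,
    hiPerm]

lemma mapsTo_row (S : Set ℤ) (a : ℤ) (ha : a ∈ S) : ∀ (l : List ℤ), (∀ b ∈ l, b ∈ S) →
    (∀ x ∈ S, ((l.map fun b => Equiv.swap a b).prod) x ∈ S) ∧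
    (∀ x ∈ S, (((l.map fun b => Equiv.swap a b).prod)⁻¹) x ∈ S) := by
  intro l
  induction l with
  | nil => intro _; simp
  | cons b t ih =>
    intro hl
    obtain ⟨ih1, ih2⟩ := ih (fun c hc => hl c (List.mem_cons_of_mem _ hc))
    have hb : b ∈ S := hl b (List.mem_cons_self)
    constructor
    · intro x hx
      simp only [List.map_cons, List.prod_cons, Equiv.Perm.mul_apply]
      have := ih1 x hx
      rw [Equiv.swap_apply_def]
      split_ifs <;> assumption
    · intro x hx
      simp only [List.map_cons, List.prod_cons, mul_inv_rev, Equiv.Perm.mul_apply]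
      apply ih2
      rw [Equiv.swap_inv, Equiv.swap_apply_def]
      split_ifs <;> assumption

lemma mapsTo_prod (S : Set ℤ) : ∀ (l : List (Equiv.Perm ℤ)),
    (∀ f ∈ l, (∀ x ∈ S, f x ∈ S) ∧ (∀ x ∈ S, f⁻¹ x ∈ S)) →
    (∀ x ∈ S, l.prod x ∈ S) ∧ (∀ x ∈ S, (l.prod)⁻¹ x ∈ S) := by
  intro l
  induction l with
  | nil => intro _; simp
  | cons f t ih =>
    intro hl
    obtain ⟨ih1, ih2⟩ := ih (fun g hg => hl g (List.mem_cons_of_mem _ hg))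
    obtain ⟨hf1, hf2⟩ := hl f (List.mem_cons_self)
    constructor
    · intro x hx
      rw [List.prod_cons, Equiv.Perm.mul_apply]
      exact hf1 _ (ih1 x hx)
    · intro x hx
      rw [List.prod_cons, mul_inv_rev, Equiv.Perm.mul_apply]
      exact ih2 _ (hf2 x hx)

lemma hiPerm_mapsTo (hO : O ⊆ Pfin n) (hi1 : 1 ≤ i) (hin : i ≤ (n:ℤ)) :
    (∀ x ∈ {x : ℤ | i ≤ |x| ∧ |x| ≤ (n:ℤ)}, hiPerm n O i x ∈ {x : ℤ | i ≤ |x| ∧ |x| ≤ (n:ℤ)}) ∧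
    (∀ x ∈ {x : ℤ | i ≤ |x| ∧ |x| ≤ (n:ℤ)}, (hiPerm n O i)⁻¹ x ∈ {x : ℤ | i ≤ |x| ∧ |x| ≤ (n:ℤ)}) := by
  apply mapsTo_prod
  intro f hf
  obtain ⟨t, ht, rfl⟩ := List.mem_map.mp hf
  rw [List.mem_range] at ht
  apply mapsTo_row
  · show i ≤ |i + (t:ℤ)| ∧ |i + (t:ℤ)| ≤ (n:ℤ)
    rw [abs_of_pos (by omega)]
    omega
  · intro b hb
    obtain ⟨hb1, hb2⟩ := List.mem_filter.mp hb
    simp only [decide_eq_true_eq] at hb2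
    have hP := mem_Pfin.mp (hO hb2)
    obtain ⟨g1, g2, g3, g4⟩ := hP
    simp only at g1 g2 g3 g4
    exact ⟨by omega, g4⟩

end Assembly

end S3

/-- For fixed `i ∈ [1,n]`, the map `j ↦ r(i,j)` is a bijection from
`[i,n] ∪ [−n,−i]` to itself. -/
theorem stmt3 (n : ℕ) (O : Finset (ℤ × ℤ)) (hA : Aset n ⊆ O) (hO : O ⊆ Pfin n)
    (i : ℤ) (hi1 : 1 ≤ i) (hin : i ≤ (n : ℤ)) :
    Set.BijOn (rMap n O i) {j : ℤ | i ≤ |j| ∧ |j| ≤ (n : ℤ)}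
      {j : ℤ | i ≤ |j| ∧ |j| ≤ (n : ℤ)} := by
  obtain ⟨hmap, hinv⟩ := S3.hiPerm_mapsTo hO hi1 hin
  have hbij : Set.BijOn (fun x => (S3.hiPerm n O i)⁻¹ x) {j : ℤ | i ≤ |j| ∧ |j| ≤ (n : ℤ)}
      {j : ℤ | i ≤ |j| ∧ |j| ≤ (n : ℤ)} := by
    refine ⟨hinv, (Equiv.injective _).injOn, ?_⟩
    intro y hy
    exact ⟨S3.hiPerm n O i y, hmap y hy, S3.perm_inv_apply_self _ _⟩
  exact hbij.congr (fun x hx => (S3.rMap_eq hO hi1 hin hx.1 hx.2).symm)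

end
end
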